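/- arXiv:1811.09692 — 2 statements merged into one kernel-verified Lean document; each statement's English description precedes it below -/
import Mathlib

section
/- Let v be a continuous 1-periodic real-valued function on ℝ whose smallest period is 1, with ∫₀¹ v(θ) dθ = 0. Suppose there exist real numbers a, b, E such that v(θ) + v(aθ + b) = E for all θ ∈ ℝ. Then a = 1 or a = -1, and E = 0. -/
/-- If `v` is continuous, 1-periodic with smallest period 1 and zero mean, and
`v θ + v (a θ + b) = E` for all `θ`, then `a = ±1` and `E = 0`. -/
theorem stmt_0 (v : ℝ → ℝ) (hcont : Continuous v)
    (hper : Function.Periodic v 1)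
    (hmin : ∀ p : ℝ, 0 < p → p ≤ 1 → Function.Periodic v p → p = 1)
    (hmean : ∫ θ in (0:ℝ)..1, v θ = 0)
    (a b E : ℝ) (hid : ∀ θ : ℝ, v θ + v (a * θ + b) = E) :
    (a = 1 ∨ a = -1) ∧ E = 0 := by
  -- a ≠ 0
  have ha0 : a ≠ 0 := by
    intro h
    subst h
    have hconst : ∀ θ, v θ = E - v b := by
      intro θ
      have := hid θ
      simp only [zero_mul, zero_add] at this
      linarith
    have hp : Function.Periodic v (1/2) := fun x => by
      rw [hconst x, hconst (x + 1/2)]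
    have := hmin (1/2) (by norm_num) (by norm_num) hp
    norm_num at this
  -- any period of v is an integer
  have hint : ∀ q : ℝ, Function.Periodic v q → ∃ n : ℤ, q = n := by
    intro q hq
    refine ⟨⌊q⌋, ?_⟩
    by_contra h
    have h1 : 0 < Int.fract q := by
      rcases lt_or_eq_of_le (Int.fract_nonneg q) with h' | h'
      · exact h'
      · exfalso
        apply h
        have : q - ⌊q⌋ = 0 := by rw [Int.self_sub_floor, ← h']
        linarith
    have hpf : Function.Periodic v (Int.fract q) := by
      have h2 : Function.Periodic v ((⌊q⌋ : ℝ)) := by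
        simpa using hper.int_mul ⌊q⌋
      have h3 := hq.sub_period h2
      rwa [Int.self_sub_floor] at h3
    have h2 : Int.fract q ≤ 1 := (Int.fract_lt_one q).le
    have := hmin _ h1 h2 hpf
    exact absurd this (ne_of_lt (Int.fract_lt_one q))
  -- v is periodic with period a
  have hpa : Function.Periodic v a := by
    intro x
    have h1 := hid ((x - b) / a)
    have h2 := hid ((x - b) / a + 1)
    have e1 : a * ((x - b) / a) + b = x := by field_simp; ring
    have e2 : a * ((x - b) / a + 1) + b = x + a := by field_simp; ring
    rw [e1] at h1
    rw [e2, hper ((x - b) / a)] at h2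
    linarith
  -- v is periodic with period 1/a
  have hpia : Function.Periodic v (1 / a) := by
    intro x
    have h1 := hid x
    have h2 := hid (x + 1 / a)
    have e2 : a * (x + 1 / a) + b = (a * x + b) + 1 := by field_simp; ring
    rw [e2, hper (a * x + b)] at h2
    linarith
  obtain ⟨n, hn⟩ := hint a hpa
  obtain ⟨m, hm⟩ := hint (1 / a) hpia
  have hnm : n * m = 1 := by
    have : (n : ℝ) * m = 1 := by
      rw [← hn, ← hm]
      field_simp
    exact_mod_cast this
  have hA : a = 1 ∨ a = -1 := by
    rcases Int.eq_one_or_neg_one_of_mul_eq_one hnm with h | h <;>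
      [left; right] <;> rw [hn, h] <;> norm_num
  refine ⟨hA, ?_⟩
  -- integrate the identity over one period
  have hi : IntervalIntegrable v MeasureTheory.volume 0 1 :=
    hcont.intervalIntegrable 0 1
  have key : ∫ θ in (0:ℝ)..1, v (a * θ + b) = 0 := by
    rcases hA with h | h
    · subst h
      have : ∫ θ in (0:ℝ)..1, v (1 * θ + b) = ∫ θ in b..(b + 1), v θ := by
        simp only [one_mul]
        rw [intervalIntegral.integral_comp_add_right]
        norm_num [add_comm]
      rw [this, hper.intervalIntegral_add_eq b 0]
      simpa using hmean
    · subst h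
      have : ∫ θ in (0:ℝ)..1, v (-1 * θ + b) = ∫ θ in (b - 1)..b, v θ := by
        have := intervalIntegral.integral_comp_sub_left (a := (0:ℝ)) (b := 1) v b
        simp only [sub_zero] at this
        rw [← this]
        congr 1
        ext θ
        ring_nf
      rw [this]
      have := hper.intervalIntegral_add_eq (b - 1) 0
      rw [sub_add_cancel] at this
      rw [this]
      simpa using hmean
  have hE : ∫ θ in (0:ℝ)..1, (v θ + v (a * θ + b)) = E := by
    have hfe : (fun θ => v θ + v (a * θ + b)) = fun _ => E := funext hid
    rw [hfe, intervalIntegral.integral_const]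
    simp
  have hsum : ∫ θ in (0:ℝ)..1, (v θ + v (a * θ + b)) =
      (∫ θ in (0:ℝ)..1, v θ) + ∫ θ in (0:ℝ)..1, v (a * θ + b) := by
    apply intervalIntegral.integral_add hi
    exact (hcont.comp ((continuous_const.mul continuous_id).add continuous_const)).intervalIntegrable 0 1
  rw [hsum, hmean, key] at hE
  simpa using hE.symm
end

section
/- Let w : 𝕋² → ℝ be real analytic and non-constant on every straight line segment in 𝕋². Then there exist constants C, α > 0 (depending on w and a compact energy interval J) such that for every unit line segment L ⊂ ℝ², every E ∈ J, and every δ > 0, the 1-dimensional Lebesgue measure of { (θ₁,θ₂) ∈ L : |w(θ₁,θ₂) - E| ≤ δ } is at most C·δ^α. -/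
open Set MeasureTheory

lemma sign_dichotomy (f : ℝ → ℝ) (hf : Continuous f) (a b : ℝ)
    (h : ∀ t ∈ Icc a b, 1 ≤ |f t|) :
    (∀ t ∈ Icc a b, 1 ≤ f t) ∨ (∀ t ∈ Icc a b, f t ≤ -1) := by
  by_contra hcon
  push_neg at hcon
  obtain ⟨⟨t₁, ht₁, ht₁'⟩, ⟨t₂, ht₂, ht₂'⟩⟩ := hcon
  have h1 : f t₁ ≤ -1 := by
    rcases (le_abs'.mp (h t₁ ht₁)) with h'' | h''
    · linarith
    · linarith
  have h2 : 1 ≤ f t₂ := by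
    rcases (le_abs'.mp (h t₂ ht₂)) with h'' | h''
    · linarith
    · linarith
  have hsub : uIcc t₁ t₂ ⊆ Icc a b := by
    intro x hx
    rw [mem_uIcc] at hx
    rcases hx with ⟨h1,h2⟩ | ⟨h1,h2⟩
    · exact ⟨le_trans ht₁.1 h1, le_trans h2 ht₂.2⟩
    · exact ⟨le_trans ht₂.1 h1, le_trans h2 ht₁.2⟩
  have : (0:ℝ) ∈ uIcc (f t₁) (f t₂) := by
    rw [mem_uIcc]; left; constructor <;> linarith
  obtain ⟨c, hc, hc0⟩ := intermediate_value_uIcc (hf.continuousOn (s := uIcc t₁ t₂)) this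
  have := h c (hsub hc)
  rw [hc0] at this
  norm_num at this


lemma slope_ge (f : ℝ → ℝ) (hf : ContDiff ℝ (⊤ : ℕ∞) f) (a b : ℝ)
    (h : ∀ t ∈ Icc a b, 1 ≤ deriv f t) :
    ∀ s ∈ Icc a b, ∀ t ∈ Icc a b, s ≤ t → t - s ≤ f t - f s := by
  intro s hs t ht hst
  rcases eq_or_lt_of_le hst with rfl | hlt
  · simp
  obtain ⟨c, hc, hc'⟩ := exists_hasDerivAt_eq_slope f (deriv f) hlt
    (hf.continuous.continuousOn)
    (fun x _ => (hf.differentiable (by simp)).differentiableAt.hasDerivAt)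
  have hcmem : c ∈ Icc a b := ⟨le_trans hs.1 hc.1.le, le_trans hc.2.le ht.2⟩
  have h1 : 1 ≤ (f t - f s) / (t - s) := hc' ▸ h c hcmem
  have := (le_div_iff₀ (by linarith)).mp h1
  linarith



lemma vdc_base (g : ℝ → ℝ) (hg : ContDiff ℝ (⊤ : ℕ∞) g) (a b δ : ℝ) (hδ : 0 < δ)
    (h : ∀ t ∈ Icc a b, 1 ≤ |deriv g t|) :
    volume {t : ℝ | t ∈ Icc a b ∧ |g t| ≤ δ} ≤ ENNReal.ofReal (4 * δ) := by
  set S := {t : ℝ | t ∈ Icc a b ∧ |g t| ≤ δ} with hS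
  rcases eq_empty_or_nonempty S with hE | ⟨t₀, ht₀⟩
  · rw [hE]; simp
  have key : ∀ t ∈ S, |t - t₀| ≤ 2 * δ := by
    have hd := sign_dichotomy (deriv g) (hg.continuous_deriv (by exact_mod_cast le_top)) a b h
    have main : ∀ s ∈ S, ∀ t ∈ S, s ≤ t → t - s ≤ 2 * δ := by
      intro s hs t ht hst
      have hgs := hs.2
      have hgt := ht.2
      rcases hd with hpos | hneg
      · have := slope_ge g hg a b hpos s hs.1 t ht.1 hst
        have h1 := abs_le.mp hgs
        have h2 := abs_le.mp hgt
        linarith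
      · have : t - s ≤ (-g) t - (-g) s := by
          apply slope_ge (fun x => -g x) hg.neg a b _ s hs.1 t ht.1 hst
          intro x hx
          rw [show (fun x => -g x) = -g from rfl, deriv.neg]
          linarith [hneg x hx]
        have h1 := abs_le.mp hgs
        have h2 := abs_le.mp hgt
        simp only [Pi.neg_apply] at this
        linarith
    intro t ht
    rcases le_total t t₀ with h' | h'
    · rw [abs_sub_comm, abs_of_nonneg (by linarith)]
      exact main t ht t₀ ht₀ h'
    · rw [abs_of_nonneg (by linarith)]
      exact main t₀ ht₀ t ht h'
  have hsub : S ⊆ Icc (t₀ - 2*δ) (t₀ + 2*δ) := by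
    intro t ht
    have := abs_le.mp (key t ht)
    exact ⟨by linarith [this.1], by linarith [this.2]⟩
  calc volume S ≤ volume (Icc (t₀ - 2*δ) (t₀ + 2*δ)) := measure_mono hsub
    _ = ENNReal.ofReal (4 * δ) := by rw [Real.volume_Icc]; ring_nf

lemma iteratedDeriv_cmul {g : ℝ → ℝ} (hg : ContDiff ℝ (⊤ : ℕ∞) g) (c : ℝ) (n : ℕ) (x : ℝ) :
    iteratedDeriv n (fun z => c * g z) x = c * iteratedDeriv n g x := by
  rw [← iteratedDerivWithin_univ, ← iteratedDerivWithin_univ]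
  exact iteratedDerivWithin_const_mul (mem_univ x) uniqueDiffOn_univ c
    (hg.of_le (by exact_mod_cast le_top)).contDiffWithinAt

lemma vdc (n : ℕ) : ∃ C : ℝ, 1 ≤ C ∧ ∃ α : ℝ, 0 < α ∧ α ≤ 1 ∧
    ∀ m ≤ n, ∀ g : ℝ → ℝ, ContDiff ℝ (⊤ : ℕ∞) g → ∀ a b : ℝ,
    (∀ t ∈ Icc a b, 1 ≤ |iteratedDeriv (m+1) g t|) → ∀ δ : ℝ, 0 < δ → δ ≤ 1 →
    volume {t : ℝ | t ∈ Icc a b ∧ |g t| ≤ δ} ≤ ENNReal.ofReal (C * δ ^ α) := by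
  induction n with
  | zero =>
    refine ⟨4, by norm_num, 1, by norm_num, le_refl 1, ?_⟩
    intro m hm g hg a b hd δ hδ hδ1
    interval_cases m
    rw [Real.rpow_one]
    apply vdc_base g hg a b δ hδ
    intro t ht
    have := hd t ht
    rwa [iteratedDeriv_one] at this
  | succ n IH =>
    obtain ⟨C, hC, α, hα, hα1, IH⟩ := IH
    refine ⟨4 + 2*C, by linarith, α/2, by linarith, by linarith, ?_⟩
    intro m hm g hg a b hd δ hδ hδ1
    have hδα2 : δ ^ α ≤ δ ^ (α/2) := Real.rpow_le_rpow_of_exponent_ge hδ hδ1 (by linarith)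
    have hδα2pos : 0 < δ ^ (α/2) := Real.rpow_pos_of_pos hδ _
    rcases Nat.lt_or_ge m (n+1) with hm' | hm'
    · -- use IH directly
      refine le_trans (IH m (Nat.lt_succ_iff.mp hm') g hg a b hd δ hδ hδ1) ?_
      apply ENNReal.ofReal_le_ofReal
      calc C * δ ^ α ≤ C * δ ^ (α/2) := by nlinarith
        _ ≤ (4 + 2*C) * δ ^ (α/2) := by nlinarith
    · have hmeq : m = n + 1 := le_antisymm hm hm'
      subst hmeq
      -- the real inductive step
      set η := δ ^ ((1:ℝ)/2) with hηdef
      have hη : 0 < η := Real.rpow_pos_of_pos hδ _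
      have hη1 : η ≤ 1 := Real.rpow_le_one hδ.le hδ1 (by norm_num)
      have hηη : η * η = δ := by
        rw [hηdef, ← Real.rpow_add hδ]; norm_num
      set F := iteratedDeriv (n+1) g with hFdef
      have hFcd : ContDiff ℝ (⊤ : ℕ∞) F := by
        rw [hFdef, iteratedDeriv_eq_iterate]; exact hg.iterate_deriv _
      have hdF : ∀ t ∈ Icc a b, 1 ≤ |deriv F t| := by
        intro t ht
        have := hd t ht
        rwa [iteratedDeriv_succ] at this
      -- the three pieces
      set S := {t : ℝ | t ∈ Icc a b ∧ |g t| ≤ δ} with hSdef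
      set S0 := {t : ℝ | t ∈ Icc a b ∧ |F t| ≤ η} with hS0def
      set Tp := {t : ℝ | t ∈ Icc a b ∧ η ≤ F t} with hTpdef
      set Tm := {t : ℝ | t ∈ Icc a b ∧ F t ≤ -η} with hTmdef
      have hcover : S ⊆ S0 ∪ ((Tp ∩ S) ∪ (Tm ∩ S)) := by
        intro t ht
        rcases le_or_gt (|F t|) η with h' | h'
        · exact Or.inl ⟨ht.1, h'⟩
        · rcases le_or_gt (F t) 0 with h'' | h''
          · refine Or.inr (Or.inr ⟨⟨ht.1, ?_⟩, ht⟩)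
            rw [abs_of_nonpos h''] at h'
            linarith
          · refine Or.inr (Or.inl ⟨⟨ht.1, ?_⟩, ht⟩)
            rw [abs_of_pos h''] at h'
            linarith
      have hvol0 : volume S0 ≤ ENNReal.ofReal (4 * η) := vdc_base F hFcd a b η hη hdF
      -- generic bound for monotone pieces
      have hkey : ∀ T : Set ℝ, T = Tp ∨ T = Tm →
          volume (T ∩ S) ≤ ENNReal.ofReal (C * η ^ α) := by
        intro T hT
        have hTsub : T ⊆ Icc a b := by rcases hT with rfl | rfl <;> exact fun t ht => ht.1
        have hTF : ∀ t ∈ T, η ≤ |F t| := by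
          rcases hT with rfl | rfl
          · intro t ht; rw [abs_of_pos (lt_of_lt_of_le hη ht.2)]; exact ht.2
          · intro t ht; rw [abs_of_neg (by linarith [ht.2])]; linarith [ht.2]
        have hTclosed : IsClosed T := by
          have hFc : Continuous F := hFcd.continuous
          rcases hT with rfl | rfl
          · have : Tp = Icc a b ∩ F ⁻¹' (Ici η) := rfl
            rw [this]; exact isClosed_Icc.inter (isClosed_Ici.preimage hFc)
          · have : Tm = Icc a b ∩ F ⁻¹' (Iic (-η)) := rfl
            rw [this]; exact isClosed_Icc.inter (isClosed_Iic.preimage hFc)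
        rcases eq_empty_or_nonempty T with hTe | hTne
        · rw [hTe]; simp
        have hTcpt : IsCompact T := (isCompact_Icc.of_isClosed_subset hTclosed hTsub)
        set a' := sInf T with ha'def
        set b' := sSup T with hb'def
        have ha' : a' ∈ T := hTcpt.sInf_mem hTne
        have hb' : b' ∈ T := hTcpt.sSup_mem hTne
        have hTsub2 : T ⊆ Icc a' b' := fun t ht =>
          ⟨csInf_le hTcpt.bddBelow ht, le_csSup hTcpt.bddAbove ht⟩
        -- monotonicity: Icc a' b' ⊆ {η ≤ |F|} ∩ Icc a b
        have hmid : ∀ t ∈ Icc a' b', t ∈ Icc a b ∧ η ≤ |F t| := by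
          intro t ht
          have ht1 := ht.1
          have ht2 := ht.2
          have htab : t ∈ Icc a b := ⟨le_trans (hTsub ha').1 ht.1, le_trans ht.2 (hTsub hb').2⟩
          refine ⟨htab, ?_⟩
          rcases sign_dichotomy (deriv F) (hFcd.continuous_deriv (by exact_mod_cast le_top)) a b hdF
            with hpos | hneg
          · -- F monotone on Icc a b
            rcases hT with rfl | rfl
            · have := slope_ge F hFcd a b hpos a' (hTsub ha') t htab ht.1
              have hη' := ha'.2
              rw [abs_of_pos (by linarith)]
              linarith
            · have := slope_ge F hFcd a b hpos t htab b' (hTsub hb') ht.2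
              have hη' := hb'.2
              rw [abs_of_neg (by linarith)]
              linarith
          · -- F antitone
            have hneg' : ∀ x ∈ Icc a b, 1 ≤ deriv (fun y => -F y) x := by
              intro x hx; rw [show (fun y => -F y) = -F from rfl, deriv.neg]; linarith [hneg x hx]
            rcases hT with rfl | rfl
            · have := slope_ge (fun y => -F y) hFcd.neg a b hneg' t htab b' (hTsub hb') ht.2
              have hη' := hb'.2
              rw [abs_of_pos (by linarith)]
              linarith
            · have := slope_ge (fun y => -F y) hFcd.neg a b hneg' a' (hTsub ha') t htab ht.1
              have hη' := ha'.2
              rw [abs_of_neg (by linarith)]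
              linarith
        -- apply IH to η⁻¹ • g on Icc a' b' with threshold η
        have happ := IH n (le_refl n) (fun t => η⁻¹ * g t) (contDiff_const.mul hg) a' b' ?_ η hη hη1
        · refine le_trans (measure_mono ?_) happ
          intro t ht
          refine ⟨hTsub2 ht.1, ?_⟩
          have : |g t| ≤ δ := ht.2.2
          rw [abs_mul, abs_of_pos (inv_pos.mpr hη)]
          calc η⁻¹ * |g t| ≤ η⁻¹ * δ := by
                exact mul_le_mul_of_nonneg_left this (le_of_lt (inv_pos.mpr hη))
            _ = η := by rw [← hηη]; field_simp
        · intro t ht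
          rw [iteratedDeriv_cmul hg η⁻¹ (n+1) t, abs_mul, abs_of_pos (inv_pos.mpr hη)]
          have h2 : η ≤ |iteratedDeriv (n+1) g t| := (hmid t ht).2
          rw [le_inv_mul_iff₀ hη, mul_one]
          exact h2
      -- assemble
      have h1 := hkey Tp (Or.inl rfl)
      have h2 := hkey Tm (Or.inr rfl)
      calc volume S ≤ volume S0 + (volume (Tp ∩ S) + volume (Tm ∩ S)) := by
            refine le_trans (measure_mono hcover) ?_
            refine le_trans (measure_union_le _ _) ?_
            exact add_le_add le_rfl (measure_union_le _ _)
        _ ≤ ENNReal.ofReal (4 * η) + (ENNReal.ofReal (C * η ^ α) + ENNReal.ofReal (C * η ^ α)) :=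
            add_le_add hvol0 (add_le_add h1 h2)
        _ = ENNReal.ofReal (4 * η + (C * η ^ α + C * η ^ α)) := by
            rw [← ENNReal.ofReal_add (by positivity) (by positivity),
              ← ENNReal.ofReal_add (by positivity) (by positivity)]
        _ ≤ ENNReal.ofReal ((4 + 2*C) * δ ^ (α/2)) := by
            apply ENNReal.ofReal_le_ofReal
            have e1 : η ≤ δ ^ (α/2) := by
              rw [hηdef]
              exact Real.rpow_le_rpow_of_exponent_ge hδ hδ1 (by linarith)
            have e2 : η ^ α = δ ^ (α/2) := by
              rw [hηdef, ← Real.rpow_mul hδ.le]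
              congr 1
              ring
            nlinarith [hδα2pos]

noncomputable def Phi (w : ℝ × ℝ → ℝ) (k : ℕ) (p u : ℝ × ℝ) (t : ℝ) : ℝ :=
  iteratedFDeriv ℝ k w (p + t • u) (fun _ => u)

lemma Phi_hasDerivAt (w : ℝ × ℝ → ℝ) (hw : ContDiff ℝ (⊤ : ℕ∞) w) (k : ℕ) (p u : ℝ × ℝ)
    (t : ℝ) : HasDerivAt (fun s => Phi w k p u s) (Phi w (k+1) p u t) t := by
  have hγ : HasDerivAt (fun s : ℝ => p + s • u) u t := by
    simpa using ((hasDerivAt_id t).smul_const u).const_add p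
  have hG : HasFDerivAt (iteratedFDeriv ℝ k w) (fderiv ℝ (iteratedFDeriv ℝ k w) (p + t • u))
      (p + t • u) :=
    ((hw.differentiable_iteratedFDeriv (by exact_mod_cast lt_top_iff_ne_top.2 (by simp)) ) _).hasFDerivAt
  have hcomp := hG.comp_hasDerivAt t hγ
  have happ := ((ContinuousMultilinearMap.apply ℝ (fun _ : Fin k => ℝ × ℝ) ℝ
      (fun _ => u)).hasFDerivAt.comp_hasDerivAt t hcomp)
  refine HasDerivAt.congr_deriv happ ?_
  rw [Phi, iteratedFDeriv_succ_apply_left]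
  rfl

lemma Phi_eq_iteratedDeriv (w : ℝ × ℝ → ℝ) (hw : ContDiff ℝ (⊤ : ℕ∞) w) (k : ℕ) (p u : ℝ × ℝ)
    (t : ℝ) : iteratedDeriv k (fun s => w (p + s • u)) t = Phi w k p u t := by
  induction k generalizing t with
  | zero => simp [Phi, iteratedFDeriv_zero_apply]
  | succ k ih =>
    rw [iteratedDeriv_succ]
    have : deriv (iteratedDeriv k (fun s => w (p + s • u))) t
        = deriv (fun s => Phi w k p u s) t := by
      congr 1
      funext s
      exact ih s
    rw [this, (Phi_hasDerivAt w hw k p u t).deriv]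

lemma Phi_continuous (w : ℝ × ℝ → ℝ) (hw : ContDiff ℝ (⊤ : ℕ∞) w) (k : ℕ) :
    Continuous (fun z : ((ℝ × ℝ) × (ℝ × ℝ)) × ℝ => Phi w k z.1.1 z.1.2 z.2) := by
  have h1 : Continuous (fun z : ((ℝ × ℝ) × (ℝ × ℝ)) × ℝ => z.1.1 + z.2 • z.1.2) := by
    fun_prop
  have h2 : Continuous (iteratedFDeriv ℝ k w) :=
    hw.continuous_iteratedFDeriv (by exact_mod_cast le_top)
  have h3 : Continuous (fun z : ((ℝ × ℝ) × (ℝ × ℝ)) × ℝ =>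
      (iteratedFDeriv ℝ k w (z.1.1 + z.2 • z.1.2), (fun _ : Fin k => z.1.2))) := by
    refine Continuous.prodMk (h2.comp h1) (continuous_pi fun i => ?_)
    fun_prop
  exact continuous_eval.comp h3

lemma analytic_const_of_derivs_zero (g : ℝ → ℝ) (hg : ∀ x : ℝ, AnalyticAt ℝ g x) (t₀ : ℝ)
    (h : ∀ k : ℕ, iteratedDeriv (k+1) g t₀ = 0) : ∀ t, g t = g t₀ := by
  set G : ℝ → ℝ := fun t => g t - g t₀ with hGdef
  have hGan : ∀ x : ℝ, AnalyticAt ℝ G x := fun x => (hg x).sub analyticAt_const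
  have hGd : ∀ k : ℕ, iteratedDeriv k G t₀ = 0 := by
    intro k
    cases k with
    | zero => simp [hGdef]
    | succ k =>
      rw [iteratedDeriv_succ', show deriv G = deriv g from funext fun x => deriv_sub_const _]
      rw [← iteratedDeriv_succ']
      exact h k
  obtain ⟨p, hp⟩ := hGan t₀
  obtain ⟨r, hpr⟩ := hp
  have hp0 : p = 0 := by
    ext n m
    have h1 := hpr.factorial_smul (1:ℝ) n
    rw [← iteratedDeriv_eq_iteratedFDeriv, hGd n] at h1
    have h2 : p n (fun _ => (1:ℝ)) = 0 := by
      rw [nsmul_eq_mul] at h1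
      rcases mul_eq_zero.mp h1 with h' | h'
      · exact absurd h' (by exact_mod_cast Nat.factorial_ne_zero n)
      · exact h'
    have h3 : p n = ContinuousMultilinearMap.mkPiRing ℝ (Fin n) (p n fun _ => 1) :=
      (ContinuousMultilinearMap.mkPiRing_apply_one_eq_self (p n)).symm
    rw [h3, h2]
    simp
  rw [hp0] at hpr
  have hev : G =ᶠ[nhds t₀] 0 := (HasFPowerSeriesAt.eventually_eq_zero ⟨r, hpr⟩)
  have hzero : EqOn G 0 univ :=
    AnalyticOnNhd.eqOn_zero_of_preconnected_of_eventuallyEq_zero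
      (fun x _ => hGan x) isPreconnected_univ (mem_univ t₀) hev
  intro t
  have := hzero (mem_univ t)
  simp only [hGdef, Pi.zero_apply] at this
  linarith

lemma iteratedDeriv_sub_const' (f : ℝ → ℝ) (E : ℝ) (m : ℕ) :
    iteratedDeriv (m+1) (fun s => f s - E) = iteratedDeriv (m+1) f := by
  have h : deriv (fun s => f s - E) = deriv f := funext fun s => deriv_sub_const E
  rw [iteratedDeriv_succ', iteratedDeriv_succ', h]

/-- If `w : ℝ² → ℝ` is real analytic, `ℤ²`-periodic, and non-constant on every straight
line, then for every compact energy interval `[E₁,E₂]` there are `C, α > 0` such that for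
every unit line segment `L`, every `E ∈ [E₁,E₂]` and every `δ > 0`, the 1D measure of
`{x ∈ L : |w x - E| ≤ δ}` is at most `C δ^α`. -/
theorem stmt_8 (w : ℝ × ℝ → ℝ)
    (han : ∀ x : ℝ × ℝ, AnalyticAt ℝ w x)
    (hper1 : ∀ x : ℝ × ℝ, w (x.1 + 1, x.2) = w x)
    (hper2 : ∀ x : ℝ × ℝ, w (x.1, x.2 + 1) = w x)
    (hnc : ∀ p u : ℝ × ℝ, u ≠ 0 → ∃ t s : ℝ, w (p + t • u) ≠ w (p + s • u))
    (E₁ E₂ : ℝ) :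
    ∃ C > (0:ℝ), ∃ α > (0:ℝ), ∀ p q : ℝ × ℝ,
      Real.sqrt ((p.1 - q.1) ^ 2 + (p.2 - q.2) ^ 2) = 1 →
      ∀ E ∈ Set.Icc E₁ E₂, ∀ δ > (0:ℝ),
      MeasureTheory.volume {t : ℝ | t ∈ Set.Icc (0:ℝ) 1 ∧ |w (p + t • (q - p)) - E| ≤ δ}
        ≤ ENNReal.ofReal (C * δ ^ α) := by
  have hw : ContDiff ℝ (⊤ : ℕ∞) w := by
    apply contDiff_iff_contDiffAt.2
    intro x
    exact (han x).contDiffAt.of_le le_top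
  -- periodicity in each variable for integer shifts
  have wperx : ∀ (m : ℤ) (x : ℝ × ℝ), w (x.1 + (m:ℝ), x.2) = w x := by
    intro m x
    induction m using Int.induction_on generalizing x with
    | zero => simp
    | succ k ih =>
      have h1 := hper1 (x.1 + (k:ℝ), x.2)
      simp only at h1
      push_cast
      rw [show x.1 + ((k:ℝ)+1) = (x.1 + (k:ℝ)) + 1 by ring, h1]
      exact ih x
    | pred k ih =>
      have h1 := hper1 (x.1 + (-(k:ℝ)-1), x.2)
      simp only at h1
      push_cast
      rw [show x.1 + (-(k:ℝ)-1) = (x.1 + (-(k:ℝ)-1)) by ring]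
      have h2 : w (x.1 + (-(k:ℝ)-1) + 1, x.2) = w x := by
        rw [show x.1 + (-(k:ℝ)-1) + 1 = x.1 + (-(k:ℝ)) by ring]
        have := ih x
        push_cast at this
        exact this
      rw [← h2, h1]
  have wpery : ∀ (m : ℤ) (x : ℝ × ℝ), w (x.1, x.2 + (m:ℝ)) = w x := by
    intro m x
    induction m using Int.induction_on generalizing x with
    | zero => simp
    | succ k ih =>
      have h1 := hper2 (x.1, x.2 + (k:ℝ))
      simp only at h1
      push_cast
      rw [show x.2 + ((k:ℝ)+1) = (x.2 + (k:ℝ)) + 1 by ring, h1]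
      exact ih x
    | pred k ih =>
      have h1 := hper2 (x.1, x.2 + (-(k:ℝ)-1))
      simp only at h1
      push_cast
      have h2 : w (x.1, x.2 + (-(k:ℝ)-1) + 1) = w x := by
        rw [show x.2 + (-(k:ℝ)-1) + 1 = x.2 + (-(k:ℝ)) by ring]
        have := ih x
        push_cast at this
        exact this
      rw [← h2, h1]
  -- the compact parameter set
  set Sph : Set (ℝ × ℝ) := {u | u.1^2 + u.2^2 = 1} with hSphdef
  have hSph : IsCompact Sph := by
    apply IsCompact.of_isClosed_subset (isCompact_Icc (a := ((-1,-1) : ℝ × ℝ)) (b := (1,1)))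
    · exact isClosed_eq (by fun_prop) continuous_const
    · intro u hu
      have h1 : u.1^2 + u.2^2 = 1 := hu
      simp only [Set.mem_Icc, Prod.le_def]
      refine ⟨⟨?_, ?_⟩, ?_, ?_⟩ <;> nlinarith [sq_nonneg u.1, sq_nonneg u.2]
  set K : Set (((ℝ × ℝ) × (ℝ × ℝ)) × ℝ) :=
    (Icc ((0,0) : ℝ × ℝ) (1,1) ×ˢ Sph) ×ˢ Icc (0:ℝ) 1 with hKdef
  have hK : IsCompact K := (isCompact_Icc.prod hSph).prod isCompact_Icc
  -- pointwise non-degeneracy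
  have hpt : ∀ z ∈ K, ∃ k : ℕ, Phi w (k+1) z.1.1 z.1.2 z.2 ≠ 0 := by
    rintro ⟨⟨p, u⟩, t⟩ hz
    by_contra hcon
    push_neg at hcon
    have hu : u ≠ 0 := by
      intro h0
      have : u.1^2 + u.2^2 = 1 := hz.1.2
      rw [h0] at this
      norm_num at this
    have hgan : ∀ x : ℝ, AnalyticAt ℝ (fun s => w (p + s • u)) x := by
      intro x
      exact (han _).comp (analyticAt_const.add ((analyticAt_id).smul analyticAt_const))
    have hder : ∀ k : ℕ, iteratedDeriv (k+1) (fun s => w (p + s • u)) t = 0 := by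
      intro k
      rw [Phi_eq_iteratedDeriv w hw (k+1) p u t]
      exact hcon k
    have hconst := analytic_const_of_derivs_zero _ hgan t hder
    obtain ⟨t', s', hne⟩ := hnc p u hu
    exact hne ((hconst t').trans (hconst s').symm)
  -- local boxes
  have hloc : ∀ i : K, ∃ (k : ℕ) (c r s : ℝ) (U : Set ((ℝ × ℝ) × (ℝ × ℝ))),
      0 < c ∧ IsOpen U ∧ i.1.1 ∈ U ∧ i.1.2 ∈ Ioo r s ∧
      ∀ (p u : ℝ × ℝ) (t : ℝ), (p, u) ∈ U → t ∈ Icc r s → c ≤ |Phi w (k+1) p u t| := by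
    rintro ⟨z, hz⟩
    obtain ⟨k, hk⟩ := hpt z hz
    set c₀ := |Phi w (k+1) z.1.1 z.1.2 z.2| with hc₀
    have hc₀pos : 0 < c₀ := abs_pos.mpr hk
    have hOopen : IsOpen {z' : ((ℝ × ℝ) × (ℝ × ℝ)) × ℝ |
        c₀/2 < |Phi w (k+1) z'.1.1 z'.1.2 z'.2|} :=
      isOpen_lt continuous_const ((Phi_continuous w hw (k+1)).abs)
    have hzO : z ∈ {z' : ((ℝ × ℝ) × (ℝ × ℝ)) × ℝ |
        c₀/2 < |Phi w (k+1) z'.1.1 z'.1.2 z'.2|} := by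
      simp only [mem_setOf_eq, ← hc₀]
      linarith
    obtain ⟨U, V, hUo, hVo, hzU, hzV, hUV⟩ := isOpen_prod_iff.mp hOopen z.1 z.2 hzO
    obtain ⟨ε, hε, hball⟩ := Metric.isOpen_iff.mp hVo z.2 hzV
    refine ⟨k, c₀/2, z.2 - ε/2, z.2 + ε/2, U, by linarith, hUo, hzU, by constructor <;> linarith, ?_⟩
    intro p u t hpu ht
    have htV : t ∈ V := by
      apply hball
      rw [Metric.mem_ball, Real.dist_eq]
      have h : |t - z.2| ≤ ε/2 := abs_le.mpr ⟨by linarith [ht.1], by linarith [ht.2]⟩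
      linarith
    have := hUV (Set.mk_mem_prod hpu htV)
    exact le_of_lt this
  choose kk cc rr ss UU hcpos hUopen hmemU hmemI hbound using hloc
  set W : K → Set (((ℝ × ℝ) × (ℝ × ℝ)) × ℝ) := fun i => UU i ×ˢ Ioo (rr i) (ss i) with hWdef
  have hWopen : ∀ i : K, IsOpen (W i) := fun i => (hUopen i).prod isOpen_Ioo
  have hcover : K ⊆ ⋃ i : K, W i := by
    intro z hz
    exact mem_iUnion.2 ⟨⟨z, hz⟩, mk_mem_prod (hmemU ⟨z, hz⟩) (hmemI ⟨z, hz⟩)⟩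
  obtain ⟨T, hT⟩ := hK.elim_finite_subcover W hWopen hcover
  have hTne : T.Nonempty := by
    have hz₀ : (((0,0), (1,0)), (0:ℝ)) ∈ K := by
      refine ⟨⟨?_, ?_⟩, ?_⟩
      · simp [Prod.le_def]
      · show (1:ℝ)^2 + (0:ℝ)^2 = 1
        norm_num
      · simp
    obtain ⟨i, hiT, _⟩ := mem_iUnion₂.mp (hT hz₀)
    exact ⟨i, hiT⟩
  -- global constants
  set n : ℕ := T.sup (fun i => kk i) with hndef
  set cmin : ℝ := T.inf' hTne (fun i => cc i) with hcmindef
  have hcmin : 0 < cmin := by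
    rw [hcmindef]
    apply (Finset.lt_inf'_iff _).mpr
    intro i _
    exact hcpos i
  obtain ⟨C, hC, α, hα, hα1, hvdc⟩ := vdc n
  set Cfin : ℝ := ((T.card : ℝ) * C + 1) / cmin ^ α with hCfindef
  have hcminα : 0 < cmin ^ α := Real.rpow_pos_of_pos hcmin α
  have hCfin : 0 < Cfin := by
    apply div_pos _ hcminα
    have h0 : (0:ℝ) ≤ (T.card : ℝ) := Nat.cast_nonneg _
    nlinarith
  refine ⟨Cfin, hCfin, α, hα, ?_⟩
  intro p q hpq E _ δ hδ
  set u : ℝ × ℝ := q - p with hudef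
  have hu1 : u.1^2 + u.2^2 = 1 := by
    rw [Real.sqrt_eq_one] at hpq
    have e1 : u.1^2 = (p.1 - q.1)^2 := by rw [hudef]; simp [Prod.sub_def]; ring
    have e2 : u.2^2 = (p.2 - q.2)^2 := by rw [hudef]; simp [Prod.sub_def]; ring
    linarith
  set p' : ℝ × ℝ := (Int.fract p.1, Int.fract p.2) with hp'def
  have hp'mem : p' ∈ Icc ((0,0) : ℝ × ℝ) (1,1) := by
    simp only [Set.mem_Icc, Prod.le_def]
    exact ⟨⟨Int.fract_nonneg _, Int.fract_nonneg _⟩,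
      (Int.fract_lt_one _).le, (Int.fract_lt_one _).le⟩
  have hweq : ∀ s : ℝ, w (p + s • u) = w (p' + s • u) := by
    intro s
    have e1 : p + s • u = (((p' + s • u).1 + ((⌊p.1⌋ : ℤ) : ℝ), (p' + s • u).2).1,
        ((p' + s • u).1 + ((⌊p.1⌋ : ℤ) : ℝ), (p' + s • u).2).2 + ((⌊p.2⌋ : ℤ) : ℝ)) := by
      ext
      · show p.1 + s * u.1 = (Int.fract p.1 + s * u.1) + (⌊p.1⌋ : ℝ)
        rw [Int.fract]
        ring
      · show p.2 + s * u.2 = (Int.fract p.2 + s * u.2) + (⌊p.2⌋ : ℝ)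
        rw [Int.fract]
        ring
    rw [e1, wpery ⌊p.2⌋]
    exact wperx ⌊p.1⌋ (p' + s • u)
  have hseteq : {t : ℝ | t ∈ Set.Icc (0:ℝ) 1 ∧ |w (p + t • (q - p)) - E| ≤ δ}
      = {t : ℝ | t ∈ Set.Icc (0:ℝ) 1 ∧ |w (p' + t • u) - E| ≤ δ} := by
    ext t
    rw [mem_setOf_eq, mem_setOf_eq, ← hudef, hweq t]
  rw [hseteq]
  rcases le_or_gt cmin δ with hcase | hcase
  · calc volume {t : ℝ | t ∈ Set.Icc (0:ℝ) 1 ∧ |w (p' + t • u) - E| ≤ δ}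
        ≤ volume (Set.Icc (0:ℝ) 1) := measure_mono fun t ht => ht.1
      _ = ENNReal.ofReal 1 := by rw [Real.volume_Icc]; norm_num
      _ ≤ ENNReal.ofReal (Cfin * δ ^ α) := by
          apply ENNReal.ofReal_le_ofReal
          have h1 : cmin ^ α ≤ δ ^ α := Real.rpow_le_rpow hcmin.le hcase hα.le
          rw [hCfindef, div_mul_eq_mul_div, le_div_iff₀ hcminα]
          have h0 : (0:ℝ) ≤ (T.card : ℝ) := Nat.cast_nonneg _
          nlinarith [mul_nonneg h0 (by linarith : (0:ℝ) ≤ C), Real.rpow_pos_of_pos hδ α]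
  · -- main case: cover by boxes and apply the van der Corput bound on each
    set B : ↑K → Set ℝ := fun i =>
      {t : ℝ | t ∈ Icc (rr i) (ss i) ∧ (p', u) ∈ UU i ∧ |w (p' + t • u) - E| ≤ δ} with hBdef
    have hScover : {t : ℝ | t ∈ Set.Icc (0:ℝ) 1 ∧ |w (p' + t • u) - E| ≤ δ} ⊆ ⋃ i ∈ T, B i := by
      intro t ht
      have hzK : ((p', u), t) ∈ K := ⟨⟨hp'mem, hu1⟩, ht.1⟩
      obtain ⟨i, hiT, hiW⟩ := mem_iUnion₂.mp (hT hzK)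
      refine mem_iUnion₂.2 ⟨i, hiT, ?_⟩
      exact ⟨⟨hiW.2.1.le, hiW.2.2.le⟩, hiW.1, ht.2⟩
    have hperbox : ∀ i ∈ T, volume (B i) ≤ ENNReal.ofReal (C * (δ/cmin) ^ α) := by
      intro i hi
      by_cases hpu : (p', u) ∈ UU i
      · have hgcd : ContDiff ℝ (⊤ : ℕ∞) (fun s : ℝ => w (p' + s • u)) := by
          apply hw.comp
          exact contDiff_const.add (contDiff_id.smul contDiff_const)
        have hgcd2 : ContDiff ℝ (⊤ : ℕ∞) (fun s : ℝ => w (p' + s • u) - E) :=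
          hgcd.sub contDiff_const
        have hgcd3 : ContDiff ℝ (⊤ : ℕ∞) (fun s : ℝ => cmin⁻¹ * (w (p' + s • u) - E)) :=
          contDiff_const.mul hgcd2
        have hder : ∀ t ∈ Icc (rr i) (ss i),
            1 ≤ |iteratedDeriv (kk i + 1) (fun s : ℝ => cmin⁻¹ * (w (p' + s • u) - E)) t| := by
          intro t ht
          rw [iteratedDeriv_cmul hgcd2 cmin⁻¹ (kk i + 1) t]
          have e1 : iteratedDeriv (kk i + 1) (fun s : ℝ => w (p' + s • u) - E) t
              = iteratedDeriv (kk i + 1) (fun s : ℝ => w (p' + s • u)) t := by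
            exact congrFun (iteratedDeriv_sub_const' (fun s : ℝ => w (p' + s • u)) E (kk i)) t
          rw [e1, Phi_eq_iteratedDeriv w hw (kk i + 1) p' u t, abs_mul,
            abs_of_pos (inv_pos.mpr hcmin), le_inv_mul_iff₀ hcmin, mul_one]
          exact le_trans (Finset.inf'_le _ hi) (hbound i p' u t hpu ht)
        have happ := hvdc (kk i) (Finset.le_sup hi) _ hgcd3 (rr i) (ss i) hder (δ/cmin)
          (div_pos hδ hcmin) (le_of_lt ((div_lt_one hcmin).mpr hcase))
        refine le_trans (measure_mono ?_) happ
        intro t ht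
        refine ⟨ht.1, ?_⟩
        rw [abs_mul, abs_of_pos (inv_pos.mpr hcmin)]
        rw [div_eq_inv_mul]
        exact mul_le_mul_of_nonneg_left ht.2.2 (inv_pos.mpr hcmin).le
      · have : B i = ∅ := by
          ext t
          simp only [hBdef, mem_setOf_eq, mem_empty_iff_false, iff_false]
          rintro ⟨_, h2, _⟩
          exact hpu h2
        rw [this]
        simp
    calc volume {t : ℝ | t ∈ Set.Icc (0:ℝ) 1 ∧ |w (p' + t • u) - E| ≤ δ}
        ≤ ∑ i ∈ T, volume (B i) :=
          le_trans (measure_mono hScover) (measure_biUnion_finset_le T B)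
      _ ≤ ∑ _i ∈ T, ENNReal.ofReal (C * (δ/cmin) ^ α) := Finset.sum_le_sum hperbox
      _ = (T.card : ENNReal) * ENNReal.ofReal (C * (δ/cmin) ^ α) := by
          rw [Finset.sum_const, nsmul_eq_mul]
      _ = ENNReal.ofReal ((T.card : ℝ) * (C * (δ/cmin) ^ α)) := by
          rw [ENNReal.ofReal_mul (Nat.cast_nonneg _), ENNReal.ofReal_natCast]
      _ ≤ ENNReal.ofReal (Cfin * δ ^ α) := by
          apply ENNReal.ofReal_le_ofReal
          have hδα : 0 < δ ^ α := Real.rpow_pos_of_pos hδ α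
          rw [Real.div_rpow hδ.le hcmin.le]
          have key : (T.card : ℝ) * (C * (δ ^ α / cmin ^ α)) = (T.card * C * δ ^ α)/cmin ^ α := by
            ring
          have key2 : Cfin * δ ^ α = (((T.card : ℝ) * C + 1) * δ ^ α)/cmin ^ α := by
            rw [hCfindef]; ring
          rw [key, key2, div_le_div_iff_of_pos_right hcminα]
          nlinarith [hδα]
end
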